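/- Under (H1), there exists n_0 ≥ 1 such that for all n > n_0 the companion matrix A_n is diagonalizable over ℂ, A_n = P_n D_n P_n^{−1}, where D_n = diag(λ_{n,1},…,λ_{n,p}) contains p distinct eigenvalues ordered so that 1 > |λ_{n,1}| ≥ … ≥ |λ_{n,p}| > 0, P_n is the matrix with (i,j)-entry λ_{n,j}^{−(i−1)}, and moreover ‖P_n‖ and ‖P_n^{−1}‖ are bounded by a constant independent of n. -/

import Mathlib

open MeasureTheory ProbabilityTheory Filter Matrix Polynomial
open scoped BigOperators Topology NNReal Kronecker

/-- The `p × p` companion matrix whose first row is `θ`, with subdiagonal entries `1`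
and remaining entries `0`. -/
noncomputable def companion (p : ℕ) (θ : Fin p → ℝ) : Matrix (Fin p) (Fin p) ℝ :=
  Matrix.of fun i j => if (i : ℕ) = 0 then θ j else if (i : ℕ) = (j : ℕ) + 1 then 1 else 0

/-- Spectral radius of a real matrix: the largest modulus of its complex eigenvalues. -/
noncomputable def specRad {p : ℕ} (A : Matrix (Fin p) (Fin p) ℝ) : ℝ :=
  sSup ((fun z : ℂ => ‖z‖) '' spectrum ℂ (A.map Complex.ofReal))

/-- Frobenius norm of a complex matrix. -/
noncomputable def frobC {p q : ℕ} (M : Matrix (Fin p) (Fin q) ℂ) : ℝ :=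
  Real.sqrt (∑ i, ∑ j, Complex.normSq (M i j))

/-- The Vandermonde-type eigenvector matrix with `(i,j)` entry `λ_j^{-(i-1)}`. -/
noncomputable def Pmat {p : ℕ} (lam : Fin p → ℂ) : Matrix (Fin p) (Fin p) ℂ :=
  Matrix.of fun i j => lam j ^ (-((i : ℕ) : ℤ))

/-- Lemma 1. Under (H1), there exists `n₀ ≥ 1` such that for all
`n > n₀`, `A_n` is diagonalizable over `ℂ` as `A_n = P_n D_n P_n⁻¹`, where
`D_n = diag(λ_{n,1},…,λ_{n,p})` contains `p` distinct eigenvalues ordered so that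
`1 > |λ_{n,1}| ≥ … ≥ |λ_{n,p}| > 0`, `P_n` has `(i,j)` entry `λ_{n,j}^{-(i-1)}`, and
`‖P_n‖`, `‖P_n⁻¹‖` are bounded by a constant independent of `n`. -/
lemma eval_charpoly' {p : ℕ} (M : Matrix (Fin p) (Fin p) ℂ) (z : ℂ) :
    M.charpoly.eval z = (Matrix.scalar (Fin p) z - M).det := by
  rw [Matrix.charpoly, eval_det, Matrix.matPolyEquiv_charmatrix]
  simp

lemma mem_spectrum_of_root {p : ℕ} (M : Matrix (Fin p) (Fin p) ℂ) (z : ℂ)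
    (h : M.charpoly.IsRoot z) : z ∈ spectrum ℂ M := by
  rw [spectrum.mem_iff]
  rw [Matrix.isUnit_iff_isUnit_det, isUnit_iff_ne_zero]
  have : (algebraMap ℂ (Matrix (Fin p) (Fin p) ℂ)) z - M = Matrix.scalar (Fin p) z - M := by
    congr 1
  rw [this, ← eval_charpoly']
  simpa [Polynomial.IsRoot] using h

lemma abs_root_lt_one {p : ℕ} (B : Matrix (Fin p) (Fin p) ℝ) (hp : 0 < p)
    (hsr : specRad B < 1) (z : ℂ) (h : (B.map Complex.ofReal).charpoly.IsRoot z) :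
    ‖z‖ < 1 := by
  have hmem := mem_spectrum_of_root _ _ h
  have hbdd : BddAbove ((fun z : ℂ => ‖z‖) '' spectrum ℂ (B.map Complex.ofReal)) := by
    have hfin : (spectrum ℂ (B.map Complex.ofReal)).Finite := by
      have hne : (B.map Complex.ofReal).charpoly ≠ 0 :=
        (Matrix.charpoly_monic _).ne_zero
      refine (Polynomial.finite_setOf_isRoot hne).subset ?_
      intro w hw
      rw [spectrum.mem_iff] at hw
      simp only [Set.mem_setOf_eq, Polynomial.IsRoot, eval_charpoly']
      by_contra hdet
      apply hw
      rw [Matrix.isUnit_iff_isUnit_det, isUnit_iff_ne_zero]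
      have : (algebraMap ℂ (Matrix (Fin p) (Fin p) ℂ)) w - B.map Complex.ofReal
          = Matrix.scalar (Fin p) w - B.map Complex.ofReal := by
        congr 1
      rw [this]
      exact hdet
    exact (hfin.image _).bddAbove
  calc ‖z‖ ≤ specRad B := le_csSup hbdd ⟨z, hmem, rfl⟩
    _ < 1 := hsr

lemma prod_abs_lower (z : ℂ) (c : ℝ) (hc : 0 ≤ c) (s : Multiset ℂ)
    (h : ∀ r ∈ s, c ≤ ‖z - r‖) :
    c ^ Multiset.card s ≤ (s.map fun r => ‖z - r‖).prod := by
  induction s using Multiset.induction_on with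
  | empty => simp
  | cons a t ih =>
    simp only [Multiset.map_cons, Multiset.prod_cons, Multiset.card_cons, pow_succ]
    rw [mul_comm]
    refine mul_le_mul (h a (Multiset.mem_cons_self a t)) (ih fun r hr => h r (Multiset.mem_cons_of_mem hr)) (pow_nonneg hc _) (norm_nonneg _)

lemma multiset_eq_of_inj_mem {α : Type*} [DecidableEq α] {p : ℕ} (f : Fin p → α)
    (hf : Function.Injective f) (s : Multiset α) (hmem : ∀ i, f i ∈ s)
    (hcard : Multiset.card s = p) : Multiset.map f Finset.univ.val = s := by
  have hnodup : (Multiset.map f Finset.univ.val).Nodup :=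
    Multiset.Nodup.map hf Finset.univ.nodup
  have hle : Multiset.map f Finset.univ.val ≤ s := by
    rw [Multiset.le_iff_count]
    intro a
    by_cases ha : a ∈ Multiset.map f Finset.univ.val
    · have h1 : Multiset.count a (Multiset.map f Finset.univ.val) ≤ 1 :=
        Multiset.nodup_iff_count_le_one.mp hnodup a
      obtain ⟨i, _, rfl⟩ := Multiset.mem_map.mp ha
      exact le_trans h1 (Multiset.one_le_count_iff_mem.mpr (hmem i))
    · rw [Multiset.count_eq_zero_of_notMem ha]
      exact Nat.zero_le _
  refine (Multiset.eq_of_le_of_card_le hle ?_)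
  simp [hcard]

lemma companion_eigen {p : ℕ} (hp : 0 < p) (θn : Fin p → ℝ) (μ : ℂ) (hμ : μ ≠ 0)
    (hroot : (((companion p θn)).map Complex.ofReal).charpoly.IsRoot μ) :
    ∀ i : Fin p, (∑ k, ((companion p θn).map Complex.ofReal) i k * μ ^ (-((k : ℕ) : ℤ)))
      = μ ^ (-((i : ℕ) : ℤ)) * μ := by
  set M := (companion p θn).map Complex.ofReal with hM
  have hdet : (Matrix.scalar (Fin p) μ - M).det = 0 := by
    rw [← eval_charpoly']; exact hroot
  obtain ⟨v, hv0, hveq⟩ := (Matrix.exists_mulVec_eq_zero_iff).mpr hdet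
  have heig : ∀ i, ∑ k, M i k * v k = μ * v i := by
    intro i
    have := congrFun hveq i
    simp only [Matrix.sub_mulVec, Pi.sub_apply, Pi.zero_apply, sub_eq_zero] at this
    have h1 : ((Matrix.scalar (Fin p) μ) *ᵥ v) i = μ * v i := by
      simp [Matrix.scalar, Matrix.mulVec, dotProduct, Matrix.diagonal, Finset.sum_ite_eq]
    rw [h1] at this
    rw [this]
    simp [Matrix.mulVec, dotProduct]
  -- recurrence
  have hrec : ∀ m (h : m < p), v ⟨m, h⟩ = μ ^ (-(m : ℤ)) * v ⟨0, hp⟩ := by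
    intro m
    induction m with
    | zero => intro h; simp
    | succ m ih =>
      intro h
      have hm : m < p := Nat.lt_of_succ_lt h
      have hrow := heig ⟨m + 1, h⟩
      have hM1 : ∀ k : Fin p, M ⟨m + 1, h⟩ k = if k = (⟨m, hm⟩ : Fin p) then 1 else 0 := by
        intro k
        simp only [hM, Matrix.map_apply, companion, Matrix.of_apply]
        by_cases hk : k = (⟨m, hm⟩ : Fin p)
        · subst hk; simp
        · have : ¬ (m + 1 = (k : ℕ) + 1) := by
            intro hcon
            exact hk (Fin.ext (Nat.succ_injective hcon).symm)
          simp [this, hk]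
          omega
      rw [Finset.sum_congr rfl (fun k _ => by rw [hM1 k])] at hrow
      simp only [ite_mul, one_mul, zero_mul] at hrow
      rw [Finset.sum_ite_eq' Finset.univ (⟨m, hm⟩ : Fin p) v] at hrow
      simp only [Finset.mem_univ, if_true] at hrow
      have hstep : v ⟨m + 1, h⟩ = μ⁻¹ * v ⟨m, hm⟩ := by
        field_simp
        rw [hrow]; ring
      have hzp : μ ^ (-(((m + 1 : ℕ)) : ℤ)) = μ⁻¹ * μ ^ (-(m : ℤ)) := by
        push_cast
        rw [show -((m : ℤ) + 1) = (-(m : ℤ)) + (-1) by ring, zpow_add₀ hμ, _root_.zpow_neg_one]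
        ring
      rw [hstep, ih hm, hzp]
      ring
  have hv00 : v ⟨0, hp⟩ ≠ 0 := by
    intro h0
    apply hv0
    funext i
    have := hrec i.1 i.2
    rw [Fin.eta] at this
    rw [this, h0, mul_zero]
    rfl
  intro i
  have hw : ∀ k : Fin p, μ ^ (-((k : ℕ) : ℤ)) = (v ⟨0, hp⟩)⁻¹ * v k := by
    intro k
    have := hrec k.1 k.2
    rw [Fin.eta] at this
    rw [this]
    field_simp
  calc ∑ k, M i k * μ ^ (-((k : ℕ) : ℤ)) = ∑ k, M i k * ((v ⟨0, hp⟩)⁻¹ * v k) := by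
        refine Finset.sum_congr rfl fun k _ => by rw [hw k]
    _ = (v ⟨0, hp⟩)⁻¹ * ∑ k, M i k * v k := by
        rw [Finset.mul_sum]; refine Finset.sum_congr rfl fun k _ => by ring
    _ = (v ⟨0, hp⟩)⁻¹ * (μ * v i) := by rw [heig i]
    _ = μ ^ (-((i : ℕ) : ℤ)) * μ := by rw [hw i]; ring

lemma frob_le_of_entry_bound {p q : ℕ} (M : Matrix (Fin p) (Fin q) ℂ) (b : ℝ) (hb : 0 ≤ b)
    (h : ∀ i j, ‖M i j‖ ≤ b) : frobC M ≤ (p * q : ℕ) * b := by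
  have h1 : ∑ i, ∑ j, Complex.normSq (M i j) ≤ (p * q : ℕ) * b ^ 2 := by
    calc ∑ i, ∑ j, Complex.normSq (M i j) ≤ ∑ _i : Fin p, ∑ _j : Fin q, b ^ 2 := by
          refine Finset.sum_le_sum fun i _ => Finset.sum_le_sum fun j _ => ?_
          rw [← Complex.sq_norm]
          exact pow_le_pow_left₀ (norm_nonneg _) (h i j) 2
      _ = (p * q : ℕ) * b ^ 2 := by simp [Finset.sum_const]; ring
  have h2 : ((p * q : ℕ) : ℝ) * b ^ 2 ≤ ((p * q : ℕ) * b) ^ 2 := by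
    have : ((p * q : ℕ) : ℝ) ≤ ((p * q : ℕ) : ℝ) ^ 2 := by
      rcases Nat.eq_zero_or_pos (p * q) with h | h
      · simp [h]
      · have h1 : (1 : ℝ) ≤ (p * q : ℕ) := by exact_mod_cast h
        nlinarith
    nlinarith [sq_nonneg b]
  calc frobC M ≤ Real.sqrt ((p * q : ℕ) * b ^ 2) := Real.sqrt_le_sqrt h1
    _ ≤ Real.sqrt (((p * q : ℕ) * b) ^ 2) := Real.sqrt_le_sqrt h2
    _ = (p * q : ℕ) * b := Real.sqrt_sq (by positivity)

lemma pmat_bounds {p : ℕ} (hp : 0 < p) (μ : Fin p → ℂ) (c g : ℝ)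
    (hc : 0 < c) (hc1 : c ≤ 1) (hg : 0 < g) (hg1 : g ≤ 1)
    (hlow : ∀ i, c ≤ ‖μ i‖) (hup : ∀ i, ‖μ i‖ < 1)
    (hsep : ∀ i j, i ≠ j → g ≤ ‖μ i - μ j‖) :
    frobC (Pmat μ) ≤ (p * p : ℕ) * (c⁻¹ ^ (p - 1)) ∧
    frobC ((Pmat μ)⁻¹)
      ≤ (p * p : ℕ) * ((p.factorial : ℝ) * (c⁻¹ ^ (p - 1)) ^ p / g ^ (p * p)) := by
  set b : ℝ := c⁻¹ ^ (p - 1) with hbdef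
  have hcinv : 1 ≤ c⁻¹ := by simpa using inv_anti₀ hc hc1
  have hb1 : 1 ≤ b := one_le_pow₀ hcinv
  have hb0 : 0 ≤ b := le_trans zero_le_one hb1
  have hμnz : ∀ i, μ i ≠ 0 := fun i h => by
    have := hlow i; rw [h] at this; simp at this; linarith
  have hent : ∀ i j, ‖Pmat μ i j‖ ≤ b := by
    intro i j
    have h1 : ‖Pmat μ i j‖ = (‖μ j‖)⁻¹ ^ (i : ℕ) := by
      simp only [Pmat, Matrix.of_apply]
      rw [_root_.zpow_neg, norm_inv, norm_zpow, zpow_natCast]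
      rw [← inv_pow]
    rw [h1]
    calc (‖μ j‖)⁻¹ ^ (i : ℕ) ≤ c⁻¹ ^ (i : ℕ) := by
          refine pow_le_pow_left₀ (by positivity) ?_ _
          exact inv_anti₀ hc (hlow j)
      _ ≤ c⁻¹ ^ (p - 1) := pow_le_pow_right₀ hcinv (by omega)
  constructor
  · exact frob_le_of_entry_bound _ b hb0 hent
  · -- determinant lower bound
    set w : Fin p → ℂ := fun j => (μ j)⁻¹ with hwdef
    have hPv : Pmat μ = (Matrix.vandermonde w)ᵀ := by
      ext i j
      simp only [Pmat, Matrix.of_apply, Matrix.transpose_apply, Matrix.vandermonde, hwdef]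
      rw [_root_.zpow_neg, zpow_natCast, inv_pow]
    have hdet1 : ‖(Pmat μ).det‖
        = ∏ i : Fin p, ∏ j ∈ Finset.Ioi i, ‖w j - w i‖ := by
      rw [hPv, Matrix.det_transpose, Matrix.det_vandermonde]
      rw [norm_prod]
      refine Finset.prod_congr rfl fun i _ => ?_
      rw [norm_prod]
    have hfac : ∀ i : Fin p, ∀ j ∈ Finset.Ioi i, g ≤ ‖w j - w i‖ := by
      intro i j hj
      have hij : i ≠ j := (Finset.mem_Ioi.mp hj).ne
      have hw : w j - w i = (μ i - μ j) / (μ i * μ j) := by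
        rw [eq_div_iff (mul_ne_zero (hμnz i) (hμnz j))]
        simp only [hwdef]
        calc ((μ j)⁻¹ - (μ i)⁻¹) * (μ i * μ j)
            = (μ j)⁻¹ * μ j * μ i - (μ i)⁻¹ * μ i * μ j := by ring
          _ = μ i - μ j := by
              rw [inv_mul_cancel₀ (hμnz j), inv_mul_cancel₀ (hμnz i), one_mul, one_mul]
      rw [hw, norm_div, norm_mul]
      have h1 : ‖μ i‖ * ‖μ j‖ ≤ 1 := by
        have := hup i; have := hup j
        have := norm_nonneg (μ i); have := norm_nonneg (μ j)
        nlinarith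
      have h2 : 0 < ‖μ i‖ * ‖μ j‖ := by
        have h3 := hlow i; have h4 := hlow j
        nlinarith
      have h5 : g ≤ ‖μ i - μ j‖ := hsep i j hij
      calc g ≤ ‖μ i - μ j‖ := h5
        _ ≤ ‖μ i - μ j‖ / (‖μ i‖ * ‖μ j‖) := by
          rw [le_div_iff₀ h2]
          nlinarith [norm_nonneg (μ i - μ j)]
    have hdetlb : g ^ (p * p) ≤ ‖(Pmat μ).det‖ := by
      rw [hdet1]
      have hK : (∑ i : Fin p, (Finset.Ioi i).card) ≤ p * p := by
        calc (∑ i : Fin p, (Finset.Ioi i).card) ≤ ∑ _i : Fin p, p := by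
              refine Finset.sum_le_sum fun i _ => ?_
              calc (Finset.Ioi i).card ≤ Finset.univ.card := Finset.card_le_univ _
                _ = p := by simp
          _ = p * p := by simp [Finset.sum_const, Nat.smul_one_eq_cast]
      calc g ^ (p * p) ≤ g ^ (∑ i : Fin p, (Finset.Ioi i).card) :=
            pow_le_pow_of_le_one (le_of_lt hg) hg1 hK
        _ = ∏ i : Fin p, g ^ (Finset.Ioi i).card := by rw [← Finset.prod_pow_eq_pow_sum]
        _ = ∏ i : Fin p, ∏ _j ∈ Finset.Ioi i, g := by
            refine Finset.prod_congr rfl fun i _ => ?_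
            rw [Finset.prod_const]
        _ ≤ ∏ i : Fin p, ∏ j ∈ Finset.Ioi i, ‖w j - w i‖ := by
            refine Finset.prod_le_prod (fun i _ => ?_) (fun i _ => ?_)
            · exact Finset.prod_nonneg fun j _ => le_of_lt hg
            · exact Finset.prod_le_prod (fun j _ => le_of_lt hg) (hfac i)
    have hdetpos : 0 < ‖(Pmat μ).det‖ := lt_of_lt_of_le (by positivity) hdetlb
    -- adjugate bound
    have hadj : ∀ i j, ‖(Pmat μ).adjugate i j‖ ≤ (p.factorial : ℝ) * b ^ p := by
      intro i j
      rw [Matrix.adjugate_apply]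
      have hent2 : ∀ k l, ‖((Pmat μ).updateRow j (Pi.single i 1)) k l‖ ≤ b := by
        intro k l
        rw [Matrix.updateRow_apply]
        by_cases hk : k = j
        · simp only [hk, if_true]
          rw [Pi.single_apply]
          by_cases hl : l = i
          · simp [hl]; exact hb1
          · simp [hl]; exact hb0
        · simp only [hk, if_false]
          exact hent k l
      have := Matrix.det_le (abv := NormedField.toAbsoluteValue ℂ) hent2
      simp only [Fintype.card_fin, nsmul_eq_mul] at this
      exact this
    have hinv_ent : ∀ i j, ‖(Pmat μ)⁻¹ i j‖
        ≤ (p.factorial : ℝ) * b ^ p / g ^ (p * p) := by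
      intro i j
      rw [Matrix.inv_def, Matrix.smul_apply, smul_eq_mul, norm_mul,
        Ring.inverse_eq_inv, norm_inv]
      have h6 : (‖(Pmat μ).det‖)⁻¹ ≤ (g ^ (p * p))⁻¹ :=
        inv_anti₀ (by positivity) hdetlb
      calc (‖(Pmat μ).det‖)⁻¹ * ‖(Pmat μ).adjugate i j‖
          ≤ (g ^ (p * p))⁻¹ * ((p.factorial : ℝ) * b ^ p) := by
            refine mul_le_mul h6 (hadj i j) (norm_nonneg _) (by positivity)
        _ = (p.factorial : ℝ) * b ^ p / g ^ (p * p) := by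
            rw [inv_mul_eq_div]
    exact frob_le_of_entry_bound _ _ (by positivity) hinv_ent

lemma key {p : ℕ} (hp : 0 < p) (lam : Fin p → ℂ)
    (m0 γ δ : ℝ) (hm0 : 0 < m0)
    (hm0le : ∀ i, m0 ≤ ‖lam i‖)
    (hγ : 0 < γ) (hγle : ∀ i j, i ≠ j → γ ≤ ‖lam i - lam j‖)
    (hδ : 0 < δ) (hδ1 : δ ≤ m0 / 2) (hδ2 : δ ≤ γ / 3)
    (θn : Fin p → ℝ)
    (hsr : ∀ z : ℂ, (((companion p θn).map Complex.ofReal).charpoly).IsRoot z →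
      ‖z‖ < 1)
    (hev : ∀ i, ‖(((companion p θn).map Complex.ofReal).charpoly).eval (lam i)‖
      < δ ^ p) :
    ∃ μ : Fin p → ℂ,
      Function.Injective μ ∧
      (∀ i j : Fin p, i ≤ j → ‖μ j‖ ≤ ‖μ i‖) ∧
      (∀ i, 0 < ‖μ i‖) ∧
      (∀ i, ‖μ i‖ < 1) ∧
      ((companion p θn).map Complex.ofReal).charpoly = (∏ i, (X - C (μ i))) ∧
      IsUnit (Pmat μ) ∧
      (companion p θn).map Complex.ofReal = Pmat μ * Matrix.diagonal μ * (Pmat μ)⁻¹ ∧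
      (∀ i, m0 / 2 ≤ ‖μ i‖) ∧
      (∀ i j, i ≠ j → γ / 3 ≤ ‖μ i - μ j‖) := by
  set M := (companion p θn).map Complex.ofReal with hM
  set pn := M.charpoly with hpn
  have hmonic : pn.Monic := Matrix.charpoly_monic M
  have hdeg : pn.natDegree = p := by
    rw [hpn, Matrix.charpoly_natDegree_eq_dim]; exact Fintype.card_fin p
  have hsplit : Splits pn := IsAlgClosed.splits pn
  have hcard : Multiset.card pn.roots = p := (splits_iff_card_roots.mp hsplit).trans hdeg
  have hfact : pn = (pn.roots.map fun a => X - C a).prod :=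
    hsplit.eq_prod_roots_of_monic hmonic
  -- each lam i attracts a root
  have hnear : ∀ i, ∃ r ∈ pn.roots, ‖lam i - r‖ < δ := by
    intro i
    by_contra hcon
    push_neg at hcon
    have heval : ‖pn.eval (lam i)‖
        = (pn.roots.map fun r => ‖lam i - r‖).prod := by
      conv_lhs => rw [hfact]
      change (NormedField.toAbsoluteValue ℂ) _ = _
      rw [eval_multiset_prod, map_multiset_prod (NormedField.toAbsoluteValue ℂ),
        Multiset.map_map, Multiset.map_map]
      congr 1
      apply Multiset.map_congr rfl
      intro r _
      show ‖eval (lam i) (X - C r)‖ = _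
      simp
    have hge : δ ^ p ≤ ‖pn.eval (lam i)‖ := by
      rw [heval, ← hcard]
      exact prod_abs_lower (lam i) δ (le_of_lt hδ) pn.roots hcon
    exact absurd (hev i) (not_lt.mpr hge)
  choose pre hpre1 hpre2 using hnear
  have hpreinj : Function.Injective pre := by
    intro a b hab
    by_contra hne
    have h1 := hγle a b hne
    have h3 : ‖lam a - lam b‖
        ≤ ‖lam a - pre a‖ + ‖pre a - lam b‖ :=
      norm_sub_le_norm_sub_add_norm_sub _ _ _
    have h4 : ‖pre a - lam b‖ = ‖lam b - pre b‖ := by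
      rw [hab]; exact norm_sub_rev _ _
    have := hpre2 a; have := hpre2 b
    linarith
  set σ := Tuple.sort (fun i => ‖pre i‖) with hσ
  set μ : Fin p → ℂ := fun i => pre (σ i.rev) with hμdef
  have hμinj : Function.Injective μ :=
    hpreinj.comp (σ.injective.comp (fun a b h => Fin.rev_injective h))
  have hord : ∀ i j : Fin p, i ≤ j → ‖μ j‖ ≤ ‖μ i‖ := by
    intro i j hij
    exact Tuple.monotone_sort (fun i => ‖pre i‖) (Fin.rev_le_rev.mpr hij)
  have hμmem : ∀ i, μ i ∈ pn.roots := fun i => hpre1 _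
  have hμnear : ∀ i, ‖lam (σ i.rev) - μ i‖ < δ := fun i => hpre2 _
  have hlow : ∀ i, m0 / 2 ≤ ‖μ i‖ := by
    intro i
    have h1 : ‖lam (σ i.rev)‖ - ‖μ i‖
        ≤ ‖lam (σ i.rev) - μ i‖ := by
      have := norm_sub_le_norm_sub_add_norm_sub (lam (σ i.rev)) (μ i) 0
      simp only [sub_zero] at this
      linarith
    have h2 := hm0le (σ i.rev)
    have h3 := hμnear i
    linarith
  have hpos : ∀ i, 0 < ‖μ i‖ := fun i => lt_of_lt_of_le (by linarith) (hlow i)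
  have hlt1 : ∀ i, ‖μ i‖ < 1 := fun i => hsr _ (isRoot_of_mem_roots (hμmem i))
  have hμnz : ∀ i, μ i ≠ 0 := by
    intro i h
    have := hpos i; rw [h] at this; simp at this
  have hsep : ∀ i j, i ≠ j → γ / 3 ≤ ‖μ i - μ j‖ := by
    intro i j hne
    have hab : σ i.rev ≠ σ j.rev := by
      intro h
      exact hne (Fin.rev_injective (σ.injective h))
    have h1 := hγle _ _ hab
    have h3 : ‖lam (σ i.rev) - lam (σ j.rev)‖
        ≤ ‖lam (σ i.rev) - μ i‖ + ‖μ i - lam (σ j.rev)‖ :=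
      norm_sub_le_norm_sub_add_norm_sub _ _ _
    have h4 : ‖μ i - lam (σ j.rev)‖
        ≤ ‖μ i - μ j‖ + ‖μ j - lam (σ j.rev)‖ :=
      norm_sub_le_norm_sub_add_norm_sub _ _ _
    have h5 : ‖μ j - lam (σ j.rev)‖ = ‖lam (σ j.rev) - μ j‖ :=
      norm_sub_rev _ _
    have := hμnear i; have := hμnear j
    linarith
  have hmulti : Multiset.map μ Finset.univ.val = pn.roots :=
    multiset_eq_of_inj_mem μ hμinj _ hμmem hcard
  have hcharfact : pn = ∏ i, (X - C (μ i)) := by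
    conv_lhs => rw [hfact]
    rw [← hmulti, Multiset.map_map]
    rw [Finset.prod]
    rfl
  have hdetP : (Pmat μ).det ≠ 0 := by
    have hPv : Pmat μ = (Matrix.vandermonde fun j => (μ j)⁻¹)ᵀ := by
      ext i j
      simp only [Pmat, Matrix.of_apply, Matrix.transpose_apply, Matrix.vandermonde]
      rw [_root_.zpow_neg, zpow_natCast, inv_pow]
    rw [hPv, Matrix.det_transpose]
    rw [Ne, Matrix.det_vandermonde_eq_zero_iff]
    rintro ⟨i, j, heq, hne⟩
    exact hne (hμinj (inv_injective heq))
  have hunit : IsUnit (Pmat μ) := (Matrix.isUnit_iff_isUnit_det _).mpr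
    (isUnit_iff_ne_zero.mpr hdetP)
  have hdiag : M * Pmat μ = Pmat μ * Matrix.diagonal μ := by
    ext i j
    rw [Matrix.mul_apply, Matrix.mul_diagonal]
    have := companion_eigen hp θn (μ j) (hμnz j) (isRoot_of_mem_roots (hμmem j)) i
    simpa [Pmat, hM] using this
  have hfinal : M = Pmat μ * Matrix.diagonal μ * (Pmat μ)⁻¹ := by
    have h1 : Pmat μ * (Pmat μ)⁻¹ = 1 :=
      Matrix.mul_nonsing_inv _ ((Matrix.isUnit_iff_isUnit_det _).mp hunit)
    calc M = M * (Pmat μ * (Pmat μ)⁻¹) := by rw [h1, mul_one]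
      _ = (M * Pmat μ) * (Pmat μ)⁻¹ := by rw [← Matrix.mul_assoc]
      _ = Pmat μ * Matrix.diagonal μ * (Pmat μ)⁻¹ := by rw [hdiag]
  exact ⟨μ, hμinj, hord, hpos, hlt1, hcharfact, hunit, hfinal, hlow, hsep⟩


theorem companion_diagonalizable
    (p : ℕ) (hp : 0 < p) (θ : ℕ → Fin p → ℝ)
    (A : ℕ → Matrix (Fin p) (Fin p) ℝ) (hA : ∀ n, A n = companion p (θ n))
    (hρlt : ∀ n, specRad (A n) < 1)
    (Alim : Matrix (Fin p) (Fin p) ℝ) (lam : Fin p → ℂ)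
    -- (H1): convergence of the companion matrix to `A`, whose (distinct, nonzero)
    -- eigenvalues `λ_1, …, λ_p` are ordered by decreasing modulus with `|λ_1| = ρ(A) = 1`,
    -- and whose top-right entry is nonzero
    (hconv : Tendsto A atTop (𝓝 Alim))
    (hchar : (Alim.map Complex.ofReal).charpoly = ∏ i, (X - C (lam i)))
    (hinj : Function.Injective lam)
    (hnz : ∀ i, lam i ≠ 0)
    (horder : ∀ i j : Fin p, i ≤ j → ‖lam j‖ ≤ ‖lam i‖)
    (htop : ∀ i : Fin p, (i : ℕ) = 0 → ‖lam i‖ = 1)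
    (hrad : specRad Alim = 1)
    (htopright : ∀ i j : Fin p, (i : ℕ) = 0 → (j : ℕ) = p - 1 → Alim i j ≠ 0)
    :
    ∃ n₀ : ℕ, 1 ≤ n₀ ∧ ∃ lamn : ℕ → Fin p → ℂ, ∃ Cb : ℝ, ∀ n, n₀ < n →
      Function.Injective (lamn n) ∧
      (∀ i j : Fin p, i ≤ j → ‖lamn n j‖ ≤ ‖lamn n i‖) ∧
      (∀ i, 0 < ‖lamn n i‖) ∧
      (∀ i, ‖lamn n i‖ < 1) ∧
      ((A n).map Complex.ofReal).charpoly = (∏ i, (X - C (lamn n i))) ∧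
      IsUnit (Pmat (lamn n)) ∧
      (A n).map Complex.ofReal
        = Pmat (lamn n) * Matrix.diagonal (lamn n) * (Pmat (lamn n))⁻¹ ∧
      frobC (Pmat (lamn n)) ≤ Cb ∧ frobC ((Pmat (lamn n))⁻¹) ≤ Cb := by
  classical
  set i0 : Fin p := ⟨0, hp⟩ with hi0
  have hlam1 : ∀ i, ‖lam i‖ ≤ 1 := by
    intro i
    have h1 : i0 ≤ i := by simp [Fin.le_def, hi0]
    have h2 := horder i0 i h1
    rwa [htop i0 rfl] at h2
  set m0 : ℝ := Finset.univ.inf' ⟨i0, Finset.mem_univ _⟩ (fun i => ‖lam i‖)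
    with hm0def
  have hm0le : ∀ i, m0 ≤ ‖lam i‖ := fun i => Finset.inf'_le _ (Finset.mem_univ i)
  have hm0pos : 0 < m0 := by
    refine (Finset.lt_inf'_iff _).mpr ?_
    intro i _
    exact norm_pos_iff.mpr (hnz i)
  have hm0_1 : m0 ≤ 1 := le_trans (hm0le i0) (hlam1 i0)
  set S : Finset ℝ := insert (1 : ℝ) ((Finset.univ.offDiag).image
    fun q : Fin p × Fin p => ‖lam q.1 - lam q.2‖) with hSdef
  set γ : ℝ := S.min' (Finset.insert_nonempty _ _) with hγdef
  have hγpos : 0 < γ := by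
    rw [hγdef, Finset.lt_min'_iff]
    intro x hx
    rw [hSdef] at hx
    rcases Finset.mem_insert.mp hx with h | h
    · rw [h]; norm_num
    · obtain ⟨q, hq, rfl⟩ := Finset.mem_image.mp h
      have hne : q.1 ≠ q.2 := (Finset.mem_offDiag.mp hq).2.2
      exact norm_pos_iff.mpr (sub_ne_zero.mpr fun h => hne (hinj h))
  have hγ1 : γ ≤ 1 := Finset.min'_le _ _ (Finset.mem_insert_self _ _)
  have hγle : ∀ i j, i ≠ j → γ ≤ ‖lam i - lam j‖ := by
    intro i j hne
    refine Finset.min'_le _ _ ?_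
    rw [hSdef]
    refine Finset.mem_insert_of_mem (Finset.mem_image.mpr ⟨(i, j), ?_, rfl⟩)
    exact Finset.mem_offDiag.mpr ⟨Finset.mem_univ _, Finset.mem_univ _, hne⟩
  set δ : ℝ := min (m0 / 2) (γ / 3) with hδdef
  have hδpos : 0 < δ := lt_min (by linarith) (by linarith)
  have hδ1 : δ ≤ m0 / 2 := min_le_left _ _
  have hδ2 : δ ≤ γ / 3 := min_le_right _ _
  -- eventual smallness of the characteristic polynomial at the limit eigenvalues
  have hev_ev : ∀ᶠ n in atTop, ∀ i : Fin p,
      ‖(((A n).map Complex.ofReal).charpoly).eval (lam i)‖ < δ ^ p := by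
    rw [Filter.eventually_all]
    intro i
    have hFcont : Continuous fun B : Matrix (Fin p) (Fin p) ℝ =>
        (Matrix.scalar (Fin p) (lam i) - B.map Complex.ofReal).det := by
      apply Continuous.matrix_det
      apply continuous_matrix
      intro a b
      exact continuous_const.sub (Complex.continuous_ofReal.comp
        ((continuous_apply b).comp (continuous_apply a)))
    have hT : Tendsto (fun n => (Matrix.scalar (Fin p) (lam i) - (A n).map Complex.ofReal).det)
        atTop (𝓝 ((Matrix.scalar (Fin p) (lam i) - Alim.map Complex.ofReal).det)) :=
      (hFcont.tendsto Alim).comp hconv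
    have hzero : (Matrix.scalar (Fin p) (lam i) - Alim.map Complex.ofReal).det = 0 := by
      rw [← eval_charpoly', hchar, Polynomial.eval_prod]
      refine Finset.prod_eq_zero (Finset.mem_univ i) ?_
      simp
    rw [hzero] at hT
    have hT2 : Tendsto (fun n =>
        ‖(((A n).map Complex.ofReal).charpoly).eval (lam i)‖) atTop (𝓝 0) := by
      have heq : (fun n => ‖(((A n).map Complex.ofReal).charpoly).eval (lam i)‖)
          = fun n => ‖(Matrix.scalar (Fin p) (lam i) - (A n).map Complex.ofReal).det‖ := by
        funext n; rw [eval_charpoly']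
      rw [heq]
      have := (continuous_norm.tendsto 0).comp hT
      simpa [Function.comp_def] using this
    exact hT2.eventually_lt_const (by positivity)
  obtain ⟨N, hN⟩ := Filter.eventually_atTop.mp hev_ev
  set Q : ℕ → (Fin p → ℂ) → Prop := fun n μ =>
    Function.Injective μ ∧
    (∀ i j : Fin p, i ≤ j → ‖μ j‖ ≤ ‖μ i‖) ∧
    (∀ i, 0 < ‖μ i‖) ∧
    (∀ i, ‖μ i‖ < 1) ∧
    (((A n).map Complex.ofReal).charpoly = (∏ i, (X - C (μ i)))) ∧
    IsUnit (Pmat μ) ∧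
    ((A n).map Complex.ofReal = Pmat μ * Matrix.diagonal μ * (Pmat μ)⁻¹) ∧
    (∀ i, m0 / 2 ≤ ‖μ i‖) ∧
    (∀ i j, i ≠ j → γ / 3 ≤ ‖μ i - μ j‖) with hQdef
  have hQex : ∀ n, N ≤ n → ∃ μ, Q n μ := by
    intro n hn
    have h1 := hN n hn
    have hsr : ∀ z : ℂ, (((companion p (θ n)).map Complex.ofReal).charpoly).IsRoot z →
        ‖z‖ < 1 := by
      intro z hz
      refine abs_root_lt_one (companion p (θ n)) hp ?_ z hz
      rw [← hA n]; exact hρlt n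
    have hev' : ∀ i, ‖(((companion p (θ n)).map Complex.ofReal).charpoly).eval (lam i)‖ < δ ^ p := by
      intro i; rw [← hA n]; exact h1 i
    obtain ⟨μ, hμ1, hμ2, hμ3, hμ4, hμ5, hμ6, hμ7, hμ8, hμ9⟩ :=
      key hp lam m0 γ δ hm0pos hm0le hγpos hγle hδpos hδ1 hδ2 (θ n) hsr hev'
    refine ⟨μ, hμ1, hμ2, hμ3, hμ4, ?_, hμ6, ?_, hμ8, hμ9⟩
    · rw [hA n]; exact hμ5
    · rw [hA n]; exact hμ7
  set lamn : ℕ → Fin p → ℂ := fun n => if h : ∃ μ, Q n μ then h.choose else fun _ => 0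
    with hlamndef
  set b : ℝ := (m0 / 2)⁻¹ ^ (p - 1) with hbdef
  set Cb : ℝ := max (((p * p : ℕ) : ℝ) * b)
    (((p * p : ℕ) : ℝ) * ((p.factorial : ℝ) * b ^ p / (γ / 3) ^ (p * p))) with hCbdef
  refine ⟨N + 1, Nat.le_add_left 1 N, lamn, Cb, ?_⟩
  intro n hn
  have hex : ∃ μ, Q n μ := hQex n (by omega)
  have hlamn_eq : lamn n = hex.choose := by
    rw [hlamndef]; exact dif_pos hex
  have hQn : Q n (lamn n) := by
    rw [hlamn_eq]; exact hex.choose_spec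
  obtain ⟨hμ1, hμ2, hμ3, hμ4, hμ5, hμ6, hμ7, hμ8, hμ9⟩ := hQn
  have hbounds := pmat_bounds hp (lamn n) (m0 / 2) (γ / 3)
    (by linarith) (by linarith) (by linarith) (by linarith) hμ8 hμ4 hμ9
  refine ⟨hμ1, hμ2, hμ3, hμ4, hμ5, hμ6, hμ7, ?_, ?_⟩
  · exact le_trans hbounds.1 (le_max_left _ _)
  · exact le_trans hbounds.2 (le_max_right _ _)
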